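/- Let f : A → B be a proper continuous map of locally compact Hausdorff spaces, and let Iᵏ = [−1,1]ᵏ. Then Z(f) × Iᵏ is homeomorphic to the mapping cylinder Z(g) of the map g : A × Iᵏ ∪ Z(f) × ∂Iᵏ → B defined by g = (f ∘ pr_A) on A × Iᵏ and g = ρ ∘ pr_{Z(f)} on Z(f) × ∂Iᵏ, where ρ : Z(f) → B is the mapping cylinder retraction, and this homeomorphism can be chosen to be the identity on B = B × {0}. -/

import Mathlib

open unitInterval

variable {A B : Type*} [TopologicalSpace A] [TopologicalSpace B]

/-- The gluing relation for the mapping cylinder of `f`: `(a,1) ~ f a`. -/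
def cylRel (f : C(A, B)) : (A × I ⊕ B) → (A × I ⊕ B) → Prop := fun x y =>
  x = y ∨ (∃ a : A, x = Sum.inl (a, 1) ∧ y = Sum.inr (f a)) ∨
    (∃ a : A, y = Sum.inl (a, 1) ∧ x = Sum.inr (f a))

/-- The mapping cylinder `Z(f)`. -/
def Cyl (f : C(A, B)) : Type _ := Quot (cylRel f)

instance (f : C(A, B)) : TopologicalSpace (Cyl f) :=
  inferInstanceAs (TopologicalSpace (Quot (cylRel f)))

/-- The inclusion `B ↪ Z(f)`. -/
def cylIncl (f : C(A, B)) : B → Cyl f := fun b => Quot.mk _ (Sum.inr b)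

/-- The canonical embedding `A ↪ Z(f)`, `a ↦ (a, 0)`. -/
def cylEmb (f : C(A, B)) : A → Cyl f := fun a => Quot.mk _ (Sum.inl (a, 0))

/-- The mapping cylinder retraction `ρ : Z(f) → B`, as a continuous map. -/
def cylRetr (f : C(A, B)) : C(Cyl f, B) :=
  ⟨Quot.lift (Sum.elim (fun p => f p.1) id) (by
      rintro x y (rfl | ⟨a, rfl, rfl⟩ | ⟨a, rfl, rfl⟩) <;> rfl),
    continuous_quot_lift _ ((f.continuous.comp continuous_fst).sumElim continuous_id)⟩

/-- The cube `Iᵏ = [−1,1]ᵏ` as a subspace of `ℝᵏ`. -/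
abbrev Icube (k : ℕ) : Type _ := {x : Fin k → ℝ // ∀ i, |x i| ≤ 1}

/-- The subspace `A × Iᵏ ∪ Z(f) × ∂Iᵏ` of `Z(f) × Iᵏ`. -/
def cylBdry (f : C(A, B)) (k : ℕ) : Set (Cyl f × Icube k) :=
  {p | (∃ a : A, p.1 = cylEmb f a) ∨ ∃ i, |(p.2 : Fin k → ℝ) i| = 1}

/-- The map `g : A × Iᵏ ∪ Z(f) × ∂Iᵏ → B`, given by `ρ` composed with the projection. -/
def gMap (f : C(A, B)) (k : ℕ) : C(↥(cylBdry f k), B) :=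
  ⟨fun p => cylRetr f p.1.1,
    (cylRetr f).continuous.comp (continuous_fst.comp continuous_subtype_val)⟩

namespace MCC

/-! ### Auxiliary facts about norms and the cube -/

lemma cube_abs_le_norm {k : ℕ} (x : Fin k → ℝ) (i : Fin k) : |x i| ≤ ‖x‖ := by
  simpa [Real.norm_eq_abs] using norm_le_pi_norm x i

lemma cube_norm_le_one {k : ℕ} (x : Icube k) : ‖(x.1 : Fin k → ℝ)‖ ≤ 1 := by
  refine pi_norm_le_iff_of_nonneg zero_le_one |>.mpr fun i => ?_
  simpa [Real.norm_eq_abs] using x.2 i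

lemma exists_abs_eq_norm {k : ℕ} (x : Fin k → ℝ) (hx : ‖x‖ ≠ 0) : ∃ i, |x i| = ‖x‖ := by
  have hk : Nonempty (Fin k) := by
    by_contra h
    refine hx ?_
    have : x = 0 := funext fun i => absurd ⟨i⟩ h
    simp [this]
  obtain ⟨i, -, hi⟩ := Finset.exists_max_image Finset.univ (fun i => |x i|)
    ⟨hk.some, Finset.mem_univ _⟩
  refine ⟨i, le_antisymm (cube_abs_le_norm x i) ?_⟩
  refine pi_norm_le_iff_of_nonneg (abs_nonneg _) |>.mpr fun j => ?_
  simpa [Real.norm_eq_abs] using hi j (Finset.mem_univ j)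

instance (k : ℕ) : CompactSpace (Icube k) := by
  have h1 : {x : Fin k → ℝ | ∀ i, |x i| ≤ 1} = Set.pi Set.univ (fun _ => Set.Icc (-1:ℝ) 1) := by
    ext x
    simp only [Set.mem_setOf_eq, Set.mem_univ_pi, Set.mem_Icc, abs_le]
  have h2 : IsCompact {x : Fin k → ℝ | ∀ i, |x i| ≤ 1} := by
    rw [h1]; exact isCompact_univ_pi (fun _ => isCompact_Icc)
  exact isCompact_iff_compactSpace.mp h2

/-- The zero point of the cube. -/
def czero (k : ℕ) : Icube k := ⟨fun _ => 0, fun i => by simp⟩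

/-- Scaling a cube point by an element of `[0,1]`. -/
def cscale {k : ℕ} (u : I) (x : Icube k) : Icube k :=
  ⟨fun i => u.1 * x.1 i, fun i => by
    rw [abs_mul]
    exact mul_le_one₀ (abs_le.mpr ⟨by linarith [u.2.1], u.2.2⟩) (abs_nonneg _) (x.2 i)⟩

lemma cscale_norm {k : ℕ} (u : I) (x : Icube k) :
    ‖((cscale u x).1 : Fin k → ℝ)‖ = u.1 * ‖(x.1 : Fin k → ℝ)‖ := by
  have : ((cscale u x).1 : Fin k → ℝ) = u.1 • (x.1 : Fin k → ℝ) := rfl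
  rw [this, norm_smul, Real.norm_eq_abs, abs_of_nonneg u.2.1]

/-! ### The collapse map and equality in the cylinder -/

variable {f : C(A, B)}

/-- Normal form of a representative in the mapping cylinder. -/
noncomputable def collapse (f : C(A, B)) : (A × I ⊕ B) → (A × I ⊕ B) := fun p =>
  match p with
  | .inl (a, t) => if t = 1 then .inr (f a) else .inl (a, t)
  | .inr b => .inr b

lemma q_glue (f : C(A, B)) (a : A) :
    (Quot.mk (cylRel f) (.inl (a, 1)) : Cyl f) = Quot.mk _ (.inr (f a)) :=
  Quot.sound (Or.inr (Or.inl ⟨a, rfl, rfl⟩))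

lemma collapse_inl_one (f : C(A, B)) (a : A) :
    collapse f (.inl (a, 1)) = .inr (f a) := if_pos rfl

lemma collapse_inl_ne (f : C(A, B)) (a : A) {t : I} (h : t ≠ 1) :
    collapse f (.inl (a, t)) = .inl (a, t) := if_neg h

lemma collapse_rel (f : C(A, B)) {p p' : A × I ⊕ B} (h : cylRel f p p') :
    collapse f p = collapse f p' := by
  rcases h with rfl | ⟨a, rfl, rfl⟩ | ⟨a, rfl, rfl⟩ <;> simp [collapse]

lemma q_collapse (f : C(A, B)) (p : A × I ⊕ B) :
    (Quot.mk (cylRel f) (collapse f p) : Cyl f) = Quot.mk _ p := by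
  rcases p with ⟨a, t⟩ | b
  · by_cases ht : t = 1
    · subst ht
      simp only [collapse, if_pos rfl]
      exact (q_glue f a).symm
    · simp [collapse, ht]
  · rfl

lemma q_eq_iff (f : C(A, B)) (p p' : A × I ⊕ B) :
    (Quot.mk (cylRel f) p : Cyl f) = Quot.mk _ p' ↔ collapse f p = collapse f p' := by
  constructor
  · intro h
    exact congrArg (Quot.lift (collapse f) (fun _ _ hr => collapse_rel f hr)) h
  · intro h
    rw [← q_collapse f p, ← q_collapse f p', h]

lemma I_zero_ne_one : (0 : I) ≠ 1 := by
  intro h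
  have := congrArg Subtype.val h
  norm_num at this


section Maps

variable (f : C(A, B)) (k : ℕ)

/-- Squeezing the cylinder towards the top, on representatives, `A`-part. -/
noncomputable def sigA : (A × I) × I → Cyl f := fun p =>
  Quot.mk _ (.inl (p.1.1, ⟨1 - p.2.1 * (1 - p.1.2.1), by
    constructor <;> nlinarith [p.1.2.2.1, p.1.2.2.2, p.2.2.1, p.2.2.2]⟩))

/-- Squeezing, `B`-part. -/
noncomputable def sigB : B × I → Cyl f := fun p => Quot.mk _ (.inr p.1)

lemma q_mk_inl_eq (f : C(A, B)) (a : A) {t : I} (h : t.1 = 1) :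
    (Quot.mk (cylRel f) (.inl (a, t)) : Cyl f) = Quot.mk _ (.inr (f a)) := by
  rw [show t = 1 from Subtype.ext h]
  exact q_glue f a

lemma sigA_continuous : Continuous (sigA f) := by
  refine continuous_quot_mk.comp (continuous_inl.comp ?_)
  refine ((continuous_fst.comp continuous_fst)).prodMk (Continuous.subtype_mk ?_ _)
  have h1 : Continuous fun p : (A × I) × I => p.2.1 := continuous_subtype_val.comp continuous_snd
  have h2 : Continuous fun p : (A × I) × I => p.1.2.1 :=
    continuous_subtype_val.comp (continuous_snd.comp continuous_fst)
  continuity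

lemma sigB_continuous : Continuous (sigB f) :=
  continuous_quot_mk.comp (continuous_inr.comp continuous_fst)

/-- Squeezing on representatives. -/
noncomputable def sigHat : (A × I ⊕ B) × I → Cyl f := fun p =>
  match p with
  | (.inl y, u) => sigA f (y, u)
  | (.inr b, u) => sigB f (b, u)

lemma sigHat_eq : sigHat f =
    (Sum.elim (sigA f) (sigB f)) ∘
      ⇑(Homeomorph.sumProdDistrib (X := A × I) (Y := B) (Z := I)) := by
  funext p
  rcases p with ⟨y | b, u⟩ <;> rfl

lemma sigHat_continuous : Continuous (sigHat f) := by
  rw [sigHat_eq]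
  exact ((sigA_continuous f).sumElim (sigB_continuous f)).comp
    (Homeomorph.continuous _)

lemma sigHat_respects (u : I) {p p' : A × I ⊕ B} (h : cylRel f p p') :
    sigHat f (p, u) = sigHat f (p', u) := by
  rcases h with rfl | ⟨a, rfl, rfl⟩ | ⟨a, rfl, rfl⟩
  · rfl
  · show sigA f ((a, 1), u) = sigB f (f a, u)
    exact q_mk_inl_eq f a (by simp)
  · show sigB f (f a, u) = sigA f ((a, 1), u)
    exact (q_mk_inl_eq f a (by simp)).symm

/-- Squeezing the cylinder towards the top. -/
noncomputable def sig : Cyl f × I → Cyl f := fun p =>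
  Quot.liftOn p.1 (fun y => sigHat f (y, p.2)) (fun _ _ h => sigHat_respects f p.2 h)

lemma sig_continuous : Continuous (sig f) := by
  refine Topology.IsQuotientMap.continuous_lift_prod_left isQuotientMap_quot_mk ?_
  exact sigHat_continuous f

@[simp] lemma sig_inl (a : A) (t : I) (u : I) :
    sig f (Quot.mk _ (.inl (a, t)), u) = Quot.mk _ (.inl (a, ⟨1 - u.1 * (1 - t.1), by
      constructor <;> nlinarith [t.2.1, t.2.2, u.2.1, u.2.2]⟩)) := rfl

@[simp] lemma sig_inr (b : B) (u : I) :
    sig f (Quot.mk _ (.inr b), u) = Quot.mk _ (.inr b) := rfl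

lemma sig_zero (z : Cyl f) : sig f (z, 0) = Quot.mk _ (.inr (cylRetr f z)) := by
  induction z using Quot.ind with
  | _ p =>
    rcases p with ⟨a, t⟩ | b
    · rw [sig_inl]
      exact q_mk_inl_eq f a (by simp)
    · rfl

/-- The map `Z(g) → Z(f) × Iᵏ` on representatives. -/
noncomputable def Fhat : (↥(cylBdry f k) × I ⊕ B) → Cyl f × Icube k := fun p =>
  match p with
  | .inl (P, s) => (sig f (P.1.1, unitInterval.symm s), cscale (unitInterval.symm s) P.1.2)
  | .inr b => (Quot.mk _ (.inr b), czero k)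

lemma Fhat_eq : Fhat f k = (Sum.elim
    (fun w : ↥(cylBdry f k) × I =>
      (sig f (w.1.1.1, unitInterval.symm w.2), cscale (unitInterval.symm w.2) w.1.1.2))
    (fun b : B => (Quot.mk _ (.inr b), czero k))) ∘
    (Equiv.refl _) := by
  funext p
  rcases p with ⟨P, s⟩ | b <;> rfl

lemma Fhat_continuous : Continuous (Fhat f k) := by
  rw [Fhat_eq]
  simp only [Equiv.coe_refl, Function.comp_id]
  refine Continuous.sumElim ?_ ?_
  · have hsymm : Continuous fun w : ↥(cylBdry f k) × I => unitInterval.symm w.2 :=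
      unitInterval.continuous_symm.comp continuous_snd
    have hz : Continuous fun w : ↥(cylBdry f k) × I => w.1.1.1 :=
      continuous_fst.comp (continuous_subtype_val.comp continuous_fst)
    have hx : Continuous fun w : ↥(cylBdry f k) × I => w.1.1.2 :=
      continuous_snd.comp (continuous_subtype_val.comp continuous_fst)
    refine Continuous.prodMk ?_ ?_
    · exact (sig_continuous f).comp (hz.prodMk hsymm)
    · refine Continuous.subtype_mk ?_ _
      refine continuous_pi fun i => ?_
      exact (continuous_subtype_val.comp hsymm).mul
        ((continuous_apply i).comp (continuous_subtype_val.comp hx))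
  · exact (continuous_quot_mk.comp continuous_inr).prodMk continuous_const

lemma Fhat_glue (P : ↥(cylBdry f k)) :
    Fhat f k (.inl (P, 1)) = Fhat f k (.inr (gMap f k P)) := by
  show (sig f (P.1.1, unitInterval.symm 1), cscale (unitInterval.symm 1) P.1.2) = _
  rw [unitInterval.symm_one]
  rw [sig_zero]
  refine Prod.ext rfl ?_
  ext i
  show ((0:I)).1 * P.1.2.1 i = 0
  simp

/-- The map `F : Z(g) → Z(f) × Iᵏ`. -/
noncomputable def Fmap : Cyl (gMap f k) → Cyl f × Icube k :=
  Quot.lift (Fhat f k) (by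
    rintro p p' (rfl | ⟨P, rfl, rfl⟩ | ⟨P, rfl, rfl⟩)
    · rfl
    · exact Fhat_glue f k P
    · exact (Fhat_glue f k P).symm)

lemma Fmap_continuous : Continuous (Fmap f k) :=
  continuous_quot_lift _ (Fhat_continuous f k)

end Maps

/-! ### The inverse map `G` -/

/-- The "radial coordinate" on the cylinder times cube. -/
noncomputable def mval (k : ℕ) (t : I) (x : Icube k) : ℝ :=
  max (1 - t.1) ‖(x.1 : Fin k → ℝ)‖

lemma mval_nonneg (k : ℕ) (t : I) (x : Icube k) : 0 ≤ mval k t x :=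
  le_trans (by linarith [t.2.2]) (le_max_left _ _)

lemma mval_le_one (k : ℕ) (t : I) (x : Icube k) : mval k t x ≤ 1 :=
  max_le (by linarith [t.2.1]) (cube_norm_le_one x)

lemma one_sub_le_mval (k : ℕ) (t : I) (x : Icube k) : 1 - t.1 ≤ mval k t x :=
  le_max_left _ _

lemma norm_le_mval (k : ℕ) (t : I) (x : Icube k) : ‖(x.1 : Fin k → ℝ)‖ ≤ mval k t x :=
  le_max_right _ _

/-- Renormalized height coordinate. -/
noncomputable def tI (k : ℕ) (t : I) (x : Icube k) : I :=
  ⟨1 - (1 - t.1) / mval k t x, by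
    constructor
    · have h1 : (1 - t.1) / mval k t x ≤ 1 :=
        div_le_one_of_le₀ (one_sub_le_mval k t x) (mval_nonneg k t x)
      linarith
    · have h2 : 0 ≤ (1 - t.1) / mval k t x :=
        div_nonneg (by linarith [t.2.2]) (mval_nonneg k t x)
      linarith⟩

/-- Renormalized cube coordinate. -/
noncomputable def xI (k : ℕ) (t : I) (x : Icube k) : Icube k :=
  ⟨fun i => x.1 i / mval k t x, fun i => by
    rw [abs_div, abs_of_nonneg (mval_nonneg k t x)]
    exact div_le_one_of_le₀ (le_trans (cube_abs_le_norm _ i) (norm_le_mval k t x))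
      (mval_nonneg k t x)⟩

/-- Renormalized cube coordinate, `B`-version. -/
noncomputable def xN (k : ℕ) (x : Icube k) : Icube k :=
  ⟨fun i => x.1 i / ‖(x.1 : Fin k → ℝ)‖, fun i => by
    rw [abs_div, abs_of_nonneg (norm_nonneg _)]
    exact div_le_one_of_le₀ (cube_abs_le_norm _ i) (norm_nonneg _)⟩

/-- Cylinder coordinate in the new mapping cylinder. -/
noncomputable def sI (k : ℕ) (t : I) (x : Icube k) : I :=
  ⟨1 - mval k t x, by
    constructor
    · linarith [mval_le_one k t x]
    · linarith [mval_nonneg k t x]⟩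

/-- Cylinder coordinate, `B`-version. -/
noncomputable def sB (k : ℕ) (x : Icube k) : I :=
  ⟨1 - ‖(x.1 : Fin k → ℝ)‖, by
    constructor
    · linarith [cube_norm_le_one x]
    · linarith [norm_nonneg (x.1 : Fin k → ℝ)]⟩

section GSide

variable (f : C(A, B)) (k : ℕ)

/-- The compact parameter space for boundary points over an `A`-point. -/
def Dset : Set (I × Icube k) := {w | w.1 = 0 ∨ ∃ i, |w.2.1 i| = 1}

lemma Dset_closed : IsClosed (Dset k) := by
  have : Dset k = {w : I × Icube k | w.1 = 0} ∪ {w | ∃ i, |w.2.1 i| = 1} := by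
    ext w; exact Iff.rfl
  rw [this]
  refine IsClosed.union (isClosed_eq continuous_fst continuous_const) ?_
  rw [Set.setOf_exists]
  refine isClosed_iUnion_of_finite fun i => isClosed_eq ?_ continuous_const
  exact _root_.continuous_abs.comp
    ((continuous_apply i).comp (continuous_subtype_val.comp continuous_snd))

lemma Dset_compact : IsCompact (Dset k) := (Dset_closed k).isCompact

/-- The compact parameter space for boundary points over a `B`-point. -/
def Sset : Set (Icube k) := {x | ∃ i, |x.1 i| = 1}

lemma Sset_closed : IsClosed (Sset k) := by
  rw [Sset, Set.setOf_exists]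
  refine isClosed_iUnion_of_finite fun i => isClosed_eq ?_ continuous_const
  exact _root_.continuous_abs.comp ((continuous_apply i).comp continuous_subtype_val)

lemma Sset_compact : IsCompact (Sset k) := (Sset_closed k).isCompact

/-- Boundary points over an `A`-point. -/
noncomputable def Phi : A × ↥(Dset k) → ↥(cylBdry f k) := fun w =>
  ⟨(Quot.mk _ (.inl (w.1, w.2.1.1)), w.2.1.2), by
    rcases w.2.2 with h0 | hi
    · left
      exact ⟨w.1, by rw [show (w.2.1.1 : I) = 0 from h0]; rfl⟩
    · right
      exact hi⟩

lemma Phi_continuous : Continuous (Phi f k) := by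
  refine Continuous.subtype_mk ?_ _
  refine Continuous.prodMk ?_ ?_
  · refine continuous_quot_mk.comp (continuous_inl.comp ?_)
    exact continuous_fst.prodMk
      ((continuous_fst.comp (continuous_subtype_val.comp continuous_snd)))
  · exact continuous_snd.comp (continuous_subtype_val.comp continuous_snd)

lemma gMap_Phi (w : A × ↥(Dset k)) : gMap f k (Phi f k w) = f w.1 := rfl

/-- Boundary points over a `B`-point. -/
noncomputable def Psi : B × ↥(Sset k) → ↥(cylBdry f k) := fun w =>
  ⟨(Quot.mk _ (.inr w.1), w.2.1), Or.inr w.2.2⟩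

lemma Psi_continuous : Continuous (Psi f k) := by
  refine Continuous.subtype_mk ?_ _
  exact (continuous_quot_mk.comp (continuous_inr.comp continuous_fst)).prodMk
    (continuous_subtype_val.comp continuous_snd)

lemma gMap_Psi (w : B × ↥(Sset k)) : gMap f k (Psi f k w) = w.1 := rfl

lemma dmem {t : I} {x : Icube k} (h : 0 < mval k t x) :
    ((tI k t x, xI k t x) : I × Icube k) ∈ Dset k := by
  rcases max_cases (1 - t.1) ‖(x.1 : Fin k → ℝ)‖ with ⟨hm, -⟩ | ⟨hm, -⟩
  · left
    refine Subtype.ext ?_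
    show 1 - (1 - t.1) / mval k t x = 0
    rw [show mval k t x = 1 - t.1 from hm]
    rw [div_self (by rw [← hm]; exact h.ne')]
    ring
  · right
    have hmv : mval k t x = ‖(x.1 : Fin k → ℝ)‖ := hm
    have hnorm : ‖(x.1 : Fin k → ℝ)‖ ≠ 0 := by rw [← hmv]; exact h.ne'
    obtain ⟨i, hi⟩ := exists_abs_eq_norm x.1 hnorm
    refine ⟨i, ?_⟩
    show |x.1 i / mval k t x| = 1
    rw [abs_div, abs_of_nonneg (mval_nonneg k t x), hmv, hi, div_self hnorm]

lemma smem {x : Icube k} (h : 0 < ‖(x.1 : Fin k → ℝ)‖) : xN k x ∈ Sset k := by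
  obtain ⟨i, hi⟩ := exists_abs_eq_norm x.1 h.ne'
  refine ⟨i, ?_⟩
  show |x.1 i / ‖(x.1 : Fin k → ℝ)‖| = 1
  rw [abs_div, abs_of_nonneg (norm_nonneg _), hi, div_self h.ne']

/-- Normalized boundary point over an `A`-point. -/
noncomputable def bpA (a : A) (t : I) (x : Icube k) (h : 0 < mval k t x) :
    ↥(cylBdry f k) := Phi f k (a, ⟨(tI k t x, xI k t x), dmem k h⟩)

/-- Normalized boundary point over a `B`-point. -/
noncomputable def bpB (b : B) (x : Icube k) (h : 0 < ‖(x.1 : Fin k → ℝ)‖) :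
    ↥(cylBdry f k) := Psi f k (b, ⟨xN k x, smem k h⟩)

/-- `G` on `A`-representatives. -/
noncomputable def GA : (A × I) × Icube k → Cyl (gMap f k) := fun p =>
  if h : 0 < mval k p.1.2 p.2 then
    Quot.mk _ (.inl (bpA f k p.1.1 p.1.2 p.2 h, sI k p.1.2 p.2))
  else Quot.mk _ (.inr (f p.1.1))

/-- `G` on `B`-representatives. -/
noncomputable def GB : B × Icube k → Cyl (gMap f k) := fun p =>
  if h : 0 < ‖(p.2.1 : Fin k → ℝ)‖ then
    Quot.mk _ (.inl (bpB f k p.1 p.2 h, sB k p.2))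
  else Quot.mk _ (.inr p.1)

lemma mval_continuous : Continuous fun p : (A × I) × Icube k => mval k p.1.2 p.2 := by
  refine Continuous.max ?_ ?_
  · exact continuous_const.sub
      (continuous_subtype_val.comp (continuous_snd.comp continuous_fst))
  · exact continuous_norm.comp (continuous_subtype_val.comp continuous_snd)

/-- The set where the radial coordinate is positive, `A`-side. -/
def UsetA : Set ((A × I) × Icube k) := {p | 0 < mval k p.1.2 p.2}

lemma UsetA_open : IsOpen (UsetA (A := A) k) :=
  isOpen_lt continuous_const (mval_continuous (A := A) k)

lemma GA_continuousOn : ContinuousOn (GA f k) (UsetA k) := by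
  rw [continuousOn_iff_continuous_restrict]
  have heq : (UsetA k).domRestrict (GA f k) = fun p : ↥(UsetA (A := A) k) =>
      Quot.mk _ (.inl (bpA f k p.1.1.1 p.1.1.2 p.1.2 p.2, sI k p.1.1.2 p.1.2)) :=
    funext fun p => dif_pos p.2
  rw [heq]
  refine continuous_quot_mk.comp (continuous_inl.comp (Continuous.prodMk ?_ ?_))
  · show Continuous fun p : ↥(UsetA (A := A) k) =>
      Phi f k (p.1.1.1, ⟨(tI k p.1.1.2 p.1.2, xI k p.1.1.2 p.1.2), dmem k p.2⟩)
    refine (Phi_continuous f k).comp ?_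
    refine Continuous.prodMk
      (continuous_fst.comp (continuous_fst.comp continuous_subtype_val)) ?_
    refine Continuous.subtype_mk ?_ _
    have hm : Continuous fun p : ↥(UsetA (A := A) k) => mval k p.1.1.2 p.1.2 :=
      (mval_continuous k).comp continuous_subtype_val
    have hmne : ∀ p : ↥(UsetA (A := A) k), mval k p.1.1.2 p.1.2 ≠ 0 :=
      fun p => ne_of_gt p.2
    have ht : Continuous fun p : ↥(UsetA (A := A) k) => (p.1.1.2 : I).1 :=
      continuous_subtype_val.comp
        ((continuous_snd.comp continuous_fst).comp continuous_subtype_val)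
    have hx : Continuous fun p : ↥(UsetA (A := A) k) => (p.1.2 : Icube k).1 :=
      continuous_subtype_val.comp (continuous_snd.comp continuous_subtype_val)
    refine Continuous.prodMk ?_ ?_
    · refine Continuous.subtype_mk ?_ _
      exact continuous_const.sub ((continuous_const.sub ht).div hm hmne)
    · refine Continuous.subtype_mk ?_ _
      exact continuous_pi fun i => ((continuous_apply i).comp hx).div hm hmne
  · refine Continuous.subtype_mk ?_ _
    exact continuous_const.sub ((mval_continuous k).comp continuous_subtype_val)

lemma dist_I_one (u : I) : dist u (1 : I) = 1 - u.1 := by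
  rw [Subtype.dist_eq, Real.dist_eq]
  rw [abs_of_nonpos (by simp [u.2.2])]
  simp

lemma GA_continuousAt (p₀ : (A × I) × Icube k) : ContinuousAt (GA f k) p₀ := by
  by_cases h0 : 0 < mval k p₀.1.2 p₀.2
  · exact (GA_continuousOn f k).continuousAt ((UsetA_open (A := A) k).mem_nhds h0)
  · obtain ⟨⟨a, t⟩, x⟩ := p₀
    have hval : GA f k ((a, t), x) = Quot.mk _ (.inr (f a)) := dif_neg h0
    rw [ContinuousAt, hval]
    intro U hU
    rw [Filter.mem_map]
    obtain ⟨O, hOU, hOopen, hO⟩ := mem_nhds_iff.mp hU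
    set V1 : Set (↥(cylBdry f k) × I) :=
      (fun w : ↥(cylBdry f k) × I => Quot.mk (cylRel (gMap f k)) (.inl w)) ⁻¹' O with hV1def
    have hV1open : IsOpen V1 :=
      hOopen.preimage (continuous_quot_mk.comp continuous_inl)
    have : CompactSpace ↥(Dset k) := isCompact_iff_compactSpace.mp (Dset_compact k)
    have hscomp : IsCompact (Set.range fun d : ↥(Dset k) => Phi f k (a, d)) :=
      isCompact_range ((Phi_continuous f k).comp (continuous_const.prodMk continuous_id))
    have hsub : (Set.range fun d : ↥(Dset k) => Phi f k (a, d)) ×ˢ ({1} : Set I) ⊆ V1 := by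
      rintro ⟨P, u⟩ ⟨⟨d, rfl⟩, hu⟩
      have hu1 : u = 1 := hu
      subst hu1
      show Quot.mk (cylRel (gMap f k)) (.inl (Phi f k (a, d), 1)) ∈ O
      rw [q_glue (gMap f k) (Phi f k (a, d))]
      exact hO
    obtain ⟨W, T, hWopen, hTopen, hsW, hsT, hWT⟩ :=
      generalized_tube_lemma hscomp isCompact_singleton hV1open hsub
    have hpre : IsOpen ((Phi f k) ⁻¹' W) := hWopen.preimage (Phi_continuous f k)
    have hsub2 : ({a} : Set A) ×ˢ (Set.univ : Set ↥(Dset k)) ⊆ (Phi f k) ⁻¹' W := by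
      rintro ⟨a', d⟩ ⟨ha', -⟩
      have ha1 : a' = a := ha'
      subst ha1
      exact hsW ⟨d, rfl⟩
    obtain ⟨VA, V', hVAopen, -, haVA, hunivV', hVA⟩ :=
      generalized_tube_lemma isCompact_singleton isCompact_univ hpre hsub2
    have h1T : (1 : I) ∈ T := hsT rfl
    obtain ⟨ε, hε, hball⟩ := Metric.isOpen_iff.mp hTopen 1 h1T
    refine mem_nhds_iff.mpr
      ⟨{p : (A × I) × Icube k | p.1.1 ∈ VA ∧ mval k p.1.2 p.2 < ε}, ?_, ?_, ?_⟩
    · rintro p ⟨hpa, hpm⟩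
      show GA f k p ∈ U
      by_cases hm : 0 < mval k p.1.2 p.2
      · have hGA : GA f k p =
            Quot.mk _ (.inl (bpA f k p.1.1 p.1.2 p.2 hm, sI k p.1.2 p.2)) := dif_pos hm
        rw [hGA]
        refine hOU (hWT ⟨?_, ?_⟩)
        · show bpA f k p.1.1 p.1.2 p.2 hm ∈ W
          exact hVA ⟨hpa, hunivV' (Set.mem_univ _)⟩
        · refine hball ?_
          rw [Metric.mem_ball, dist_I_one]
          show 1 - (1 - mval k p.1.2 p.2) < ε
          simpa using hpm
      · have hGA : GA f k p = Quot.mk _ (.inr (f p.1.1)) := dif_neg hm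
        rw [hGA]
        refine hOU ?_
        have hd0 : ((0 : I), czero k) ∈ Dset k := Or.inl rfl
        have hmem : (Phi f k (p.1.1, ⟨((0 : I), czero k), hd0⟩), (1 : I)) ∈ W ×ˢ T :=
          ⟨hVA ⟨hpa, hunivV' (Set.mem_univ _)⟩, h1T⟩
        have hin := hWT hmem
        change Quot.mk (cylRel (gMap f k)) (Sum.inl _) ∈ O at hin
        rw [q_glue (gMap f k)] at hin
        exact hin
    · exact (hVAopen.preimage (continuous_fst.comp continuous_fst)).inter
        (isOpen_lt (mval_continuous k) continuous_const)
    · refine ⟨haVA rfl, ?_⟩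
      have : mval k t x = 0 := le_antisymm (not_lt.mp h0) (mval_nonneg k t x)
      show mval k t x < ε
      rw [this]; exact hε

lemma GA_continuous : Continuous (GA f k) :=
  continuous_iff_continuousAt.mpr (GA_continuousAt f k)

lemma normB_continuous : Continuous fun p : B × Icube k => ‖(p.2.1 : Fin k → ℝ)‖ :=
  continuous_norm.comp (continuous_subtype_val.comp continuous_snd)

/-- The set where the radial coordinate is positive, `B`-side. -/
def UsetB : Set (B × Icube k) := {p | 0 < ‖(p.2.1 : Fin k → ℝ)‖}

lemma UsetB_open : IsOpen (UsetB (B := B) k) :=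
  isOpen_lt continuous_const (normB_continuous (B := B) k)

lemma GB_continuousOn : ContinuousOn (GB f k) (UsetB k) := by
  rw [continuousOn_iff_continuous_restrict]
  have heq : (UsetB k).domRestrict (GB f k) = fun p : ↥(UsetB (B := B) k) =>
      Quot.mk _ (.inl (bpB f k p.1.1 p.1.2 p.2, sB k p.1.2)) :=
    funext fun p => dif_pos p.2
  rw [heq]
  refine continuous_quot_mk.comp (continuous_inl.comp (Continuous.prodMk ?_ ?_))
  · show Continuous fun p : ↥(UsetB (B := B) k) =>
      Psi f k (p.1.1, ⟨xN k p.1.2, smem k p.2⟩)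
    refine (Psi_continuous f k).comp ?_
    refine Continuous.prodMk (continuous_fst.comp continuous_subtype_val) ?_
    refine Continuous.subtype_mk ?_ _
    have hm : Continuous fun p : ↥(UsetB (B := B) k) => ‖(p.1.2.1 : Fin k → ℝ)‖ :=
      (normB_continuous k).comp continuous_subtype_val
    have hmne : ∀ p : ↥(UsetB (B := B) k), ‖(p.1.2.1 : Fin k → ℝ)‖ ≠ 0 :=
      fun p => ne_of_gt p.2
    have hx : Continuous fun p : ↥(UsetB (B := B) k) => (p.1.2 : Icube k).1 :=
      continuous_subtype_val.comp (continuous_snd.comp continuous_subtype_val)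
    refine Continuous.subtype_mk ?_ _
    exact continuous_pi fun i => ((continuous_apply i).comp hx).div hm hmne
  · refine Continuous.subtype_mk ?_ _
    exact continuous_const.sub ((normB_continuous k).comp continuous_subtype_val)

lemma GB_continuousAt (p₀ : B × Icube k) : ContinuousAt (GB f k) p₀ := by
  by_cases h0 : 0 < ‖(p₀.2.1 : Fin k → ℝ)‖
  · exact (GB_continuousOn f k).continuousAt ((UsetB_open (B := B) k).mem_nhds h0)
  by_cases hk : Nonempty (Fin k)
  · obtain ⟨b, x⟩ := p₀
    have hval : GB f k (b, x) = Quot.mk _ (.inr b) := dif_neg h0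
    rw [ContinuousAt, hval]
    intro U hU
    rw [Filter.mem_map]
    obtain ⟨O, hOU, hOopen, hO⟩ := mem_nhds_iff.mp hU
    set V1 : Set (↥(cylBdry f k) × I) :=
      (fun w : ↥(cylBdry f k) × I => Quot.mk (cylRel (gMap f k)) (.inl w)) ⁻¹' O with hV1def
    have hV1open : IsOpen V1 :=
      hOopen.preimage (continuous_quot_mk.comp continuous_inl)
    have : CompactSpace ↥(Sset k) := isCompact_iff_compactSpace.mp (Sset_compact k)
    have hscomp : IsCompact (Set.range fun d : ↥(Sset k) => Psi f k (b, d)) :=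
      isCompact_range ((Psi_continuous f k).comp (continuous_const.prodMk continuous_id))
    have hsub : (Set.range fun d : ↥(Sset k) => Psi f k (b, d)) ×ˢ ({1} : Set I) ⊆ V1 := by
      rintro ⟨P, u⟩ ⟨⟨d, rfl⟩, hu⟩
      have hu1 : u = 1 := hu
      subst hu1
      show Quot.mk (cylRel (gMap f k)) (.inl (Psi f k (b, d), 1)) ∈ O
      rw [q_glue (gMap f k) (Psi f k (b, d))]
      exact hO
    obtain ⟨W, T, hWopen, hTopen, hsW, hsT, hWT⟩ :=
      generalized_tube_lemma hscomp isCompact_singleton hV1open hsub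
    have hpre : IsOpen ((Psi f k) ⁻¹' W) := hWopen.preimage (Psi_continuous f k)
    have hsub2 : ({b} : Set B) ×ˢ (Set.univ : Set ↥(Sset k)) ⊆ (Psi f k) ⁻¹' W := by
      rintro ⟨b', d⟩ ⟨hb', -⟩
      have hb1 : b' = b := hb'
      subst hb1
      exact hsW ⟨d, rfl⟩
    obtain ⟨VB, V', hVBopen, -, hbVB, hunivV', hVB⟩ :=
      generalized_tube_lemma isCompact_singleton isCompact_univ hpre hsub2
    have h1T : (1 : I) ∈ T := hsT rfl
    obtain ⟨ε, hε, hball⟩ := Metric.isOpen_iff.mp hTopen 1 h1T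
    refine mem_nhds_iff.mpr
      ⟨{p : B × Icube k | p.1 ∈ VB ∧ ‖(p.2.1 : Fin k → ℝ)‖ < ε}, ?_, ?_, ?_⟩
    · rintro p ⟨hpb, hpm⟩
      show GB f k p ∈ U
      by_cases hm : 0 < ‖(p.2.1 : Fin k → ℝ)‖
      · have hGB : GB f k p =
            Quot.mk _ (.inl (bpB f k p.1 p.2 hm, sB k p.2)) := dif_pos hm
        rw [hGB]
        refine hOU (hWT ⟨?_, ?_⟩)
        · show bpB f k p.1 p.2 hm ∈ W
          exact hVB ⟨hpb, hunivV' (Set.mem_univ _)⟩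
        · refine hball ?_
          rw [Metric.mem_ball, dist_I_one]
          show 1 - (1 - ‖(p.2.1 : Fin k → ℝ)‖) < ε
          simpa using hpm
      · have hGB : GB f k p = Quot.mk _ (.inr p.1) := dif_neg hm
        rw [hGB]
        refine hOU ?_
        have hd0 : (⟨fun _ => 1, fun i => by simp⟩ : Icube k) ∈ Sset k :=
          ⟨hk.some, by simp⟩
        have hmem : (Psi f k (p.1, ⟨_, hd0⟩), (1 : I)) ∈ W ×ˢ T :=
          ⟨hVB ⟨hpb, hunivV' (Set.mem_univ _)⟩, h1T⟩
        have hin := hWT hmem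
        change Quot.mk (cylRel (gMap f k)) (Sum.inl _) ∈ O at hin
        rw [q_glue (gMap f k)] at hin
        exact hin
    · exact (hVBopen.preimage continuous_fst).inter
        (isOpen_lt (normB_continuous k) continuous_const)
    · refine ⟨hbVB rfl, ?_⟩
      have hx0 : ‖(x.1 : Fin k → ℝ)‖ = 0 := le_antisymm (not_lt.mp h0) (norm_nonneg _)
      show ‖(x.1 : Fin k → ℝ)‖ < ε
      rw [hx0]; exact hε
  · have hz : ∀ y : Icube k, ‖(y.1 : Fin k → ℝ)‖ = 0 := fun y => by
      rw [show y.1 = 0 from funext fun i => absurd ⟨i⟩ hk]; simp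
    have heq : GB f k = fun p : B × Icube k => Quot.mk _ (.inr p.1) :=
      funext fun p => dif_neg (by rw [hz p.2]; exact lt_irrefl 0)
    rw [heq]
    exact (continuous_quot_mk.comp (continuous_inr.comp continuous_fst)).continuousAt

lemma GB_continuous : Continuous (GB f k) :=
  continuous_iff_continuousAt.mpr (GB_continuousAt f k)

lemma Qmk_congr {P P' : ↥(cylBdry f k)} {s s' : I} (hP : P.1 = P'.1) (hs : s = s') :
    (Quot.mk (cylRel (gMap f k)) (.inl (P, s)) : Cyl (gMap f k)) =
      Quot.mk _ (.inl (P', s')) := by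
  rw [Subtype.ext hP, hs]

lemma mval_one (x : Icube k) : mval k 1 x = ‖(x.1 : Fin k → ℝ)‖ := by
  show max (1 - ((1:I)).1) _ = _
  rw [show (1 - ((1:I)).1 : ℝ) = 0 by simp]
  exact max_eq_right (norm_nonneg _)

lemma GA_glue (a : A) (x : Icube k) : GA f k ((a, 1), x) = GB f k (f a, x) := by
  have hm : mval k 1 x = ‖(x.1 : Fin k → ℝ)‖ := mval_one k x
  by_cases h : 0 < ‖(x.1 : Fin k → ℝ)‖
  · have hm' : 0 < mval k (1 : I) x := by rw [hm]; exact h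
    have h1 : GA f k ((a, 1), x) =
        Quot.mk _ (.inl (bpA f k a 1 x hm', sI k 1 x)) := dif_pos hm'
    have h2 : GB f k (f a, x) =
        Quot.mk _ (.inl (bpB f k (f a) x h, sB k x)) := dif_pos h
    rw [h1, h2]
    refine Qmk_congr f k ?_ ?_
    · show (Quot.mk _ (.inl (a, tI k 1 x)), xI k 1 x) =
        ((Quot.mk _ (.inr (f a)) : Cyl f), xN k x)
      refine Prod.ext ?_ ?_
      · show (Quot.mk (cylRel f) (.inl (a, tI k 1 x)) : Cyl f) = Quot.mk _ (.inr (f a))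
        refine q_mk_inl_eq f a ?_
        show 1 - (1 - ((1:I)).1) / mval k 1 x = 1
        simp
      · refine Subtype.ext (funext fun i => ?_)
        show x.1 i / mval k 1 x = x.1 i / ‖(x.1 : Fin k → ℝ)‖
        rw [hm]
    · refine Subtype.ext ?_
      show 1 - mval k 1 x = 1 - ‖(x.1 : Fin k → ℝ)‖
      rw [hm]
  · have hm' : ¬ 0 < mval k (1 : I) x := by rw [hm]; exact h
    rw [show GA f k ((a, 1), x) = Quot.mk _ (.inr (f a)) from dif_neg hm',
      show GB f k (f a, x) = Quot.mk _ (.inr (f a)) from dif_neg h]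

/-- `G` on representatives. -/
noncomputable def Ghat : (A × I ⊕ B) × Icube k → Cyl (gMap f k) := fun p =>
  match p with
  | (.inl y, x) => GA f k (y, x)
  | (.inr b, x) => GB f k (b, x)

lemma Ghat_eq : Ghat f k = (Sum.elim (GA f k) (GB f k)) ∘
    ⇑(Homeomorph.sumProdDistrib (X := A × I) (Y := B) (Z := Icube k)) := by
  funext p
  rcases p with ⟨y | b, x⟩ <;> rfl

lemma Ghat_continuous : Continuous (Ghat f k) := by
  rw [Ghat_eq]
  exact ((GA_continuous f k).sumElim (GB_continuous f k)).comp (Homeomorph.continuous _)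

lemma Ghat_respects (x : Icube k) {p p' : A × I ⊕ B} (h : cylRel f p p') :
    Ghat f k (p, x) = Ghat f k (p', x) := by
  rcases h with rfl | ⟨a, rfl, rfl⟩ | ⟨a, rfl, rfl⟩
  · rfl
  · exact GA_glue f k a x
  · exact (GA_glue f k a x).symm

/-- The map `G : Z(f) × Iᵏ → Z(g)`. -/
noncomputable def Gmap : Cyl f × Icube k → Cyl (gMap f k) := fun p =>
  Quot.liftOn p.1 (fun y => Ghat f k (y, p.2)) (fun _ _ h => Ghat_respects f k p.2 h)

lemma Gmap_continuous : Continuous (Gmap f k) := by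
  refine Topology.IsQuotientMap.continuous_lift_prod_left isQuotientMap_quot_mk ?_
  exact Ghat_continuous f k

lemma Qmk_congr' {P P' : ↥(cylBdry f k)} {s s' : I} (hP : P.1 = P'.1) (hs : s.1 = s'.1) :
    (Quot.mk (cylRel (gMap f k)) (.inl (P, s)) : Cyl (gMap f k)) =
      Quot.mk _ (.inl (P', s')) :=
  Qmk_congr f k hP (Subtype.ext hs)

lemma q_inl_congr (a : A) {t t' : I} (h : t.1 = t'.1) :
    (Quot.mk (cylRel f) (.inl (a, t)) : Cyl f) = Quot.mk _ (.inl (a, t')) := by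
  rw [Subtype.ext h]

lemma bdry_mval {a : A} {t : I} {x : Icube k}
    (h : ((Quot.mk (cylRel f) (.inl (a, t)) : Cyl f), x) ∈ cylBdry f k) :
    mval k t x = 1 := by
  rcases h with ⟨a', ha'⟩ | ⟨i, hi⟩
  · have hc := (q_eq_iff f _ _).mp ha'
    by_cases ht : t = 1
    · subst ht
      rw [collapse_inl_one f a, collapse_inl_ne f a' I_zero_ne_one] at hc
      simp at hc
    · rw [collapse_inl_ne f a ht, collapse_inl_ne f a' I_zero_ne_one] at hc
      have ht0 : t = 0 := congrArg Prod.snd (Sum.inl.inj hc)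
      show max (1 - t.1) ‖(x.1 : Fin k → ℝ)‖ = 1
      rw [ht0]
      rw [show (1 - ((0:I)).1 : ℝ) = 1 by simp]
      exact max_eq_left (cube_norm_le_one x)
  · have hi' : |x.1 i| = 1 := hi
    have hx1 : ‖(x.1 : Fin k → ℝ)‖ = 1 :=
      le_antisymm (cube_norm_le_one x) (by have h2 := cube_abs_le_norm x.1 i; rw [hi'] at h2; exact h2)
    show max (1 - t.1) ‖(x.1 : Fin k → ℝ)‖ = 1
    rw [hx1]
    exact max_eq_right (by linarith [t.2.1])

lemma bdry_inr_norm {b : B} {x : Icube k}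
    (h : ((Quot.mk (cylRel f) (.inr b) : Cyl f), x) ∈ cylBdry f k) :
    ‖(x.1 : Fin k → ℝ)‖ = 1 := by
  rcases h with ⟨a', ha'⟩ | ⟨i, hi⟩
  · have hc := (q_eq_iff f _ _).mp ha'
    rw [show collapse f (.inr b) = Sum.inr b from rfl,
      collapse_inl_ne f a' I_zero_ne_one] at hc
    simp at hc
  · have hi' : |x.1 i| = 1 := hi
    exact le_antisymm (cube_norm_le_one x) (by have h2 := cube_abs_le_norm x.1 i; rw [hi'] at h2; exact h2)

lemma roundtrip_inl (a : A) (t τ : I) (x X : Icube k)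
    (hP : ((Quot.mk (cylRel f) (.inl (a, t)) : Cyl f), x) ∈ cylBdry f k) (s : I)
    (hτ : 1 - τ.1 = (1 - s.1) * (1 - t.1)) (hX : X = cscale (unitInterval.symm s) x) :
    GA f k ((a, τ), X) =
      Quot.mk _ (.inl ((⟨(Quot.mk _ (.inl (a, t)), x), hP⟩ : ↥(cylBdry f k)), s)) := by
  have hm1 : mval k t x = 1 := bdry_mval f k hP
  set u : ℝ := 1 - s.1 with hu_def
  have hu_nonneg : 0 ≤ u := by simp [hu_def, s.2.2]
  have hsymm : (unitInterval.symm s).1 = u := by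
    simp [hu_def, unitInterval.symm]
  have hmv : mval k τ X = u := by
    show max (1 - τ.1) ‖(X.1 : Fin k → ℝ)‖ = u
    rw [hτ, hX, cscale_norm, hsymm, ← mul_max_of_nonneg _ _ hu_nonneg]
    show u * mval k t x = u
    rw [hm1, mul_one]
  by_cases hu : 0 < u
  · have hm' : 0 < mval k τ X := by rw [hmv]; exact hu
    rw [show GA f k ((a, τ), X) =
      Quot.mk _ (.inl (bpA f k a τ X hm', sI k τ X)) from dif_pos hm']
    refine Qmk_congr' f k ?_ ?_
    · show (Quot.mk (cylRel f) (.inl (a, tI k τ X)), xI k τ X) =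
        ((Quot.mk _ (.inl (a, t)) : Cyl f), x)
      refine Prod.ext ?_ ?_
      · refine q_inl_congr f a ?_
        show 1 - (1 - τ.1) / mval k τ X = t.1
        rw [hmv, hτ]
        field_simp
        ring
      · refine Subtype.ext (funext fun i => ?_)
        show X.1 i / mval k τ X = x.1 i
        rw [hmv, hX]
        show (unitInterval.symm s).1 * x.1 i / u = x.1 i
        rw [hsymm]
        field_simp
    · show 1 - mval k τ X = s.1
      rw [hmv]
      simp [hu_def]
  · have hs1 : s = 1 := by
      refine Subtype.ext ?_
      have : u = 0 := le_antisymm (not_lt.mp hu) hu_nonneg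
      have := this
      simp only [hu_def] at this
      show s.1 = 1
      linarith
    subst hs1
    rw [show GA f k ((a, τ), X) = Quot.mk _ (.inr (f a)) from
      dif_neg (by rw [hmv]; exact hu)]
    exact (q_glue (gMap f k) ⟨(Quot.mk _ (.inl (a, t)), x), hP⟩).symm

lemma roundtrip_inr (b : B) (x X : Icube k)
    (hP : ((Quot.mk (cylRel f) (.inr b) : Cyl f), x) ∈ cylBdry f k) (s : I)
    (hX : X = cscale (unitInterval.symm s) x) :
    GB f k (b, X) =
      Quot.mk _ (.inl ((⟨(Quot.mk _ (.inr b), x), hP⟩ : ↥(cylBdry f k)), s)) := by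
  have hx1 : ‖(x.1 : Fin k → ℝ)‖ = 1 := bdry_inr_norm f k hP
  set u : ℝ := 1 - s.1 with hu_def
  have hu_nonneg : 0 ≤ u := by simp [hu_def, s.2.2]
  have hsymm : (unitInterval.symm s).1 = u := by
    simp [hu_def, unitInterval.symm]
  have hmv : ‖(X.1 : Fin k → ℝ)‖ = u := by
    rw [hX, cscale_norm, hsymm, hx1, mul_one]
  by_cases hu : 0 < u
  · have hm' : 0 < ‖(X.1 : Fin k → ℝ)‖ := by rw [hmv]; exact hu
    rw [show GB f k (b, X) =
      Quot.mk _ (.inl (bpB f k b X hm', sB k X)) from dif_pos hm']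
    refine Qmk_congr' f k ?_ ?_
    · show ((Quot.mk (cylRel f) (.inr b) : Cyl f), xN k X) =
        ((Quot.mk _ (.inr b) : Cyl f), x)
      refine Prod.ext rfl ?_
      refine Subtype.ext (funext fun i => ?_)
      show X.1 i / ‖(X.1 : Fin k → ℝ)‖ = x.1 i
      rw [hmv, hX]
      show (unitInterval.symm s).1 * x.1 i / u = x.1 i
      rw [hsymm]
      field_simp
    · show 1 - ‖(X.1 : Fin k → ℝ)‖ = s.1
      rw [hmv]
      simp [hu_def]
  · have hs1 : s = 1 := by
      refine Subtype.ext ?_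
      have h0 : u = 0 := le_antisymm (not_lt.mp hu) hu_nonneg
      simp only [hu_def] at h0
      show s.1 = 1
      linarith
    subst hs1
    rw [show GB f k (b, X) = Quot.mk _ (.inr b) from
      dif_neg (by rw [hmv]; exact hu)]
    exact (q_glue (gMap f k) ⟨(Quot.mk _ (.inr b), x), hP⟩).symm

lemma GF (w : ↥(cylBdry f k) × I ⊕ B) :
    Gmap f k (Fmap f k (Quot.mk _ w)) = Quot.mk _ w := by
  rcases w with ⟨⟨⟨z, x⟩, hP⟩, s⟩ | b
  · obtain ⟨p, rfl⟩ := Quot.exists_rep z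
    rcases p with ⟨a, t⟩ | b
    · show Gmap f k (sig f (Quot.mk _ (.inl (a, t)), unitInterval.symm s),
        cscale (unitInterval.symm s) x) = _
      rw [sig_inl]
      exact roundtrip_inl f k a t _ x _ hP s (by rw [show ((⟨1 - (σ s).1 * (1 - t.1), by constructor <;> nlinarith [t.2.1, t.2.2, (σ s).2.1, (σ s).2.2]⟩ : I)).1 = 1 - (σ s).1 * (1 - t.1) from rfl, unitInterval.coe_symm_eq]; ring) rfl
    · show Gmap f k (sig f (Quot.mk _ (.inr b), unitInterval.symm s),
        cscale (unitInterval.symm s) x) = _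
      rw [sig_inr]
      exact roundtrip_inr f k b x _ hP s rfl
  · show GB f k (b, czero k) = Quot.mk _ (.inr b)
    refine dif_neg ?_
    have : ((czero k).1 : Fin k → ℝ) = 0 := rfl
    rw [this, norm_zero]
    exact lt_irrefl 0

lemma FG (p : A × I ⊕ B) (x : Icube k) :
    Fmap f k (Gmap f k (Quot.mk _ p, x)) = (Quot.mk _ p, x) := by
  rcases p with ⟨a, t⟩ | b
  · show Fmap f k (GA f k ((a, t), x)) = _
    by_cases hm : 0 < mval k t x
    · rw [show GA f k ((a, t), x) =
        Quot.mk _ (.inl (bpA f k a t x hm, sI k t x)) from dif_pos hm]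
      show (sig f (Quot.mk _ (.inl (a, tI k t x)), σ (sI k t x)),
        cscale (σ (sI k t x)) (xI k t x)) = _
      rw [sig_inl]
      have hmne : mval k t x ≠ 0 := ne_of_gt hm
      have hσ : (σ (sI k t x)).1 = mval k t x := by
        rw [unitInterval.coe_symm_eq]
        show 1 - (1 - mval k t x) = mval k t x
        ring
      refine Prod.ext ?_ ?_
      · refine q_inl_congr f a ?_
        show 1 - (σ (sI k t x)).1 * (1 - (tI k t x).1) = t.1
        rw [hσ]
        show 1 - mval k t x * (1 - (1 - (1 - t.1) / mval k t x)) = t.1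
        field_simp
        ring
      · refine Subtype.ext (funext fun i => ?_)
        show (σ (sI k t x)).1 * (x.1 i / mval k t x) = x.1 i
        rw [hσ]
        field_simp
    · rw [show GA f k ((a, t), x) = Quot.mk _ (.inr (f a)) from dif_neg hm]
      have hm0 : mval k t x = 0 := le_antisymm (not_lt.mp hm) (mval_nonneg k t x)
      have ht1 : t.1 = 1 := by
        have h1 := one_sub_le_mval k t x
        have h2 := t.2.2
        rw [hm0] at h1
        linarith
      have hx0 : (x.1 : Fin k → ℝ) = 0 := by
        have h1 := norm_le_mval k t x
        rw [hm0] at h1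
        exact norm_le_zero_iff.mp h1
      show ((Quot.mk _ (.inr (f a)) : Cyl f), czero k) = _
      refine Prod.ext ?_ ?_
      · exact (q_mk_inl_eq f a ht1).symm
      · refine Subtype.ext ?_
        show (fun _ => (0:ℝ)) = x.1
        rw [hx0]
        rfl
  · show Fmap f k (GB f k (b, x)) = _
    by_cases h : 0 < ‖(x.1 : Fin k → ℝ)‖
    · rw [show GB f k (b, x) =
        Quot.mk _ (.inl (bpB f k b x h, sB k x)) from dif_pos h]
      show (sig f (Quot.mk _ (.inr b), σ (sB k x)), cscale (σ (sB k x)) (xN k x)) = _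
      rw [sig_inr]
      have hσ : (σ (sB k x)).1 = ‖(x.1 : Fin k → ℝ)‖ := by
        rw [unitInterval.coe_symm_eq]
        show 1 - (1 - ‖(x.1 : Fin k → ℝ)‖) = _
        ring
      refine Prod.ext rfl ?_
      refine Subtype.ext (funext fun i => ?_)
      show (σ (sB k x)).1 * (x.1 i / ‖(x.1 : Fin k → ℝ)‖) = x.1 i
      rw [hσ]
      field_simp
    · rw [show GB f k (b, x) = Quot.mk _ (.inr b) from dif_neg h]
      have hx0 : (x.1 : Fin k → ℝ) = 0 :=
        norm_le_zero_iff.mp (not_lt.mp h)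
      show ((Quot.mk _ (.inr b) : Cyl f), czero k) = _
      refine Prod.ext rfl ?_
      refine Subtype.ext ?_
      show (fun _ => (0:ℝ)) = x.1
      rw [hx0]
      rfl

/-- The homeomorphism `Z(f) × Iᵏ ≃ₜ Z(g)`. -/
noncomputable def cylHomeo : Cyl f × Icube k ≃ₜ Cyl (gMap f k) where
  toFun := Gmap f k
  invFun := Fmap f k
  left_inv := fun p => by
    obtain ⟨z, x⟩ := p
    obtain ⟨w, rfl⟩ := Quot.exists_rep z
    exact FG f k w x
  right_inv := fun z => by
    obtain ⟨w, rfl⟩ := Quot.exists_rep z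
    exact GF f k w
  continuous_toFun := Gmap_continuous f k
  continuous_invFun := Fmap_continuous f k

lemma cylHomeo_incl (b : B) (x : Icube k) (hx : (x.1 : Fin k → ℝ) = 0) :
    cylHomeo f k (cylIncl f b, x) = cylIncl (gMap f k) b := by
  show GB f k (b, x) = Quot.mk _ (.inr b)
  refine dif_neg ?_
  rw [hx, norm_zero]
  exact lt_irrefl 0

end GSide

end MCC

/-- For a proper continuous map `f : A → B` of locally compact Hausdorff
spaces, `Z(f) × Iᵏ` is homeomorphic to the mapping cylinder `Z(g)` of
`g : A × Iᵏ ∪ Z(f) × ∂Iᵏ → B`, by a homeomorphism which is the identity on `B = B × {0}`. -/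
theorem mappingCylinder_times_cube {A B : Type*} [TopologicalSpace A] [TopologicalSpace B]
    [LocallyCompactSpace A] [T2Space A] [LocallyCompactSpace B] [T2Space B]
    (f : C(A, B)) (hproper : IsProperMap ⇑f) (k : ℕ) :
    ∃ e : (Cyl f × Icube k) ≃ₜ Cyl (gMap f k),
      ∀ b : B, e (cylIncl f b, ⟨fun _ => 0, by intro i; simp⟩) = cylIncl (gMap f k) b := by
  exact ⟨MCC.cylHomeo f k, fun b => MCC.cylHomeo_incl f k b _ rfl⟩
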